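/- If G is a group in which |N_G(H) : H| is finite for every non-normal subgroup H, and N is a normal subgroup of G, then G/N has the same property: |N_{G/N}(K) : K| is finite for every non-normal subgroup K of G/N. -/

import Mathlib

/-- The FNI condition (every non-normal subgroup has finite index in its normalizer)
passes to quotients. -/
theorem FNI_quotient {G : Type*} [Group G]
    (h : ∀ H : Subgroup G, ¬ H.Normal → H.relIndex (Subgroup.normalizer (H : Set G)) ≠ 0)
    (N : Subgroup G) [N.Normal] :
    ∀ K : Subgroup (G ⧸ N), ¬ K.Normal → K.relIndex (Subgroup.normalizer (K : Set (G ⧸ N))) ≠ 0 := by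
  intro K hK
  set f := QuotientGroup.mk' N
  have hf : Function.Surjective f := QuotientGroup.mk'_surjective N
  have hH : ¬ (K.comap f).Normal := by
    intro hn
    apply hK
    have := hn.map f hf
    rwa [Subgroup.map_comap_eq_self_of_surjective hf] at this
  have key := h (K.comap f) hH
  rwa [← Subgroup.comap_normalizer_eq_of_surjective _ hf,
    Subgroup.relIndex_comap, Subgroup.map_comap_eq_self_of_surjective hf] at key
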